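/- Let A generate a positive C₀-semigroup on a Banach lattice X, and let X_{−1,+} denote the closure of X₊ in the extrapolation space X_{−1}. Then a linear operator B : U → X_{−1} (U a Banach lattice) is positive, i.e. B U₊ ⊆ X_{−1,+}, if and only if R(λ, A_{−1}) B : U → X is positive for all λ > s(A). -/

import Mathlib

open Filter Topology Set MeasureTheory

/-- A strongly continuous one-parameter semigroup of bounded operators. -/
structure C0Semigroup (X : Type*) [NormedAddCommGroup X] [NormedSpace ℝ X] where
  toFun : ℝ → X →L[ℝ] X
  map_zero' : toFun 0 = ContinuousLinearMap.id ℝ X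
  map_add' : ∀ s t : ℝ, 0 ≤ s → 0 ≤ t → toFun (s + t) = (toFun s).comp (toFun t)
  strongCont' : ∀ x : X, ContinuousOn (fun t => toFun t x) (Set.Ici 0)

/-- `A` (an unbounded operator given as a partial linear map) is the generator
of the `C₀`-semigroup `T`. -/
def C0Semigroup.IsGenerator {X : Type*} [NormedAddCommGroup X] [NormedSpace ℝ X]
    (T : C0Semigroup X) (A : X →ₗ.[ℝ] X) : Prop :=
  (∀ x : X, x ∈ A.domain ↔
      ∃ y : X, Tendsto (fun t : ℝ => t⁻¹ • (T.toFun t x - x)) (𝓝[>] 0) (𝓝 y)) ∧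
  (∀ x : A.domain,
      Tendsto (fun t : ℝ => t⁻¹ • (T.toFun t (x : X) - (x : X))) (𝓝[>] 0) (𝓝 (A x)))

/-- `R` is the resolvent `R(l, A)` of the partial linear operator `A`. -/
def IsResolventAt {X : Type*} [NormedAddCommGroup X] [NormedSpace ℝ X]
    (A : X →ₗ.[ℝ] X) (l : ℝ) (R : X →L[ℝ] X) : Prop :=
  (∀ x : X, ∃ h : R x ∈ A.domain, l • R x - A ⟨R x, h⟩ = x) ∧
  (∀ x : A.domain, R (l • (x : X) - A x) = x)

/-- The semigroup has negative growth bound. -/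
def C0Semigroup.NegGrowthBound {X : Type*} [NormedAddCommGroup X] [NormedSpace ℝ X]
    (T : C0Semigroup X) : Prop :=
  ∃ ε > (0:ℝ), ∃ M : ℝ, ∀ t : ℝ, 0 ≤ t → ‖T.toFun t‖ ≤ M * Real.exp (-ε * t)

section OrderSmul
variable {X : Type*} [NormedAddCommGroup X] [Lattice X] [HasSolidNorm X] [IsOrderedAddMonoid X] [NormedSpace ℝ X]

/-- In a lattice ordered group, `0 ≤ y + y` implies `0 ≤ y`. -/
lemma nonneg_of_add_self_nonneg {y : X} (h : 0 ≤ y + y) : 0 ≤ y := by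
  have e1 : y + (y ⊔ 0) = (y + y) ⊔ y := by rw [add_sup, add_zero]
  have hys : 0 ≤ (y + y) ⊔ y := le_trans h le_sup_left
  have e2 : (y ⊔ 0) + (y ⊔ 0) = y + (y ⊔ 0) := by
    rw [sup_add, zero_add, e1]
    exact sup_eq_left.mpr (sup_le le_sup_right hys)
  have : y ⊔ 0 = y := add_right_cancel e2
  rw [← this]; exact le_sup_right

lemma real_smul_nonneg {c : ℝ} {x : X} (hc : 0 ≤ c) (hx : 0 ≤ x) : 0 ≤ c • x := by
  have half : ∀ z : X, 0 ≤ z → 0 ≤ (2⁻¹ : ℝ) • z := by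
    intro z hz
    apply nonneg_of_add_self_nonneg
    have : (2⁻¹ : ℝ) • z + (2⁻¹ : ℝ) • z = z := by
      rw [← add_smul]; norm_num
    rwa [this]
  have pow2 : ∀ n : ℕ, 0 ≤ ((2 : ℝ) ^ n)⁻¹ • x := by
    intro n; induction n with
    | zero => simpa using hx
    | succ n ih =>
      have key : ((2:ℝ) ^ (n+1))⁻¹ • x = (2⁻¹:ℝ) • (((2:ℝ)^n)⁻¹ • x) := by
        rw [smul_smul]; congr 1; rw [pow_succ]; ring
      rw [key]; exact half _ ih
  have dyadic : ∀ n k : ℕ, 0 ≤ ((k : ℝ) / 2 ^ n) • x := by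
    intro n k
    rw [div_eq_mul_inv, ← smul_smul, Nat.cast_smul_eq_nsmul]
    exact nsmul_nonneg (pow2 n) k
  have hq : Tendsto (fun n : ℕ => ((⌊c * 2 ^ n⌋₊ : ℝ) / 2 ^ n)) atTop (𝓝 c) := by
    have hb : ∀ n : ℕ, ‖((⌊c * 2 ^ n⌋₊ : ℝ) / 2 ^ n) - c‖ ≤ ((2:ℝ) ^ n)⁻¹ := by
      intro n
      have h2 : (0:ℝ) < 2 ^ n := by positivity
      have hfl : (⌊c * 2 ^ n⌋₊ : ℝ) ≤ c * 2 ^ n := Nat.floor_le (by positivity)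
      have hfl2 : c * 2 ^ n ≤ (⌊c * 2 ^ n⌋₊ : ℝ) + 1 := le_of_lt (Nat.lt_floor_add_one _)
      rw [Real.norm_eq_abs, abs_le]
      have hinv : ((2:ℝ)^n)⁻¹ * 2^n = 1 := inv_mul_cancel₀ h2.ne'
      constructor
      · rw [neg_le, neg_sub, sub_le_iff_le_add, ← sub_le_iff_le_add', le_div_iff₀ h2]
        nlinarith
      · rw [sub_le_iff_le_add, div_le_iff₀ h2]
        nlinarith
    have h0 : Tendsto (fun n : ℕ => ((2:ℝ) ^ n)⁻¹) atTop (𝓝 0) := by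
      simp_rw [← inv_pow]
      exact tendsto_pow_atTop_nhds_zero_of_lt_one (by norm_num) (by norm_num)
    have := squeeze_zero_norm hb h0
    simpa using this.add (tendsto_const_nhds : Tendsto (fun _ : ℕ => c) atTop (𝓝 c))
  have := hq.smul_const x
  exact le_of_tendsto_of_tendsto' tendsto_const_nhds this (fun n => dyadic n _)
end OrderSmul

section IntPos
variable {X : Type*} [NormedAddCommGroup X] [Lattice X] [HasSolidNorm X] [IsOrderedAddMonoid X] [NormedSpace ℝ X] [CompleteSpace X]

lemma integral_nonneg_Ioi {f : ℝ → X} (hf : IntegrableOn f (Ioi 0))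
    (h : ∀ t ∈ Ioi (0:ℝ), 0 ≤ f t) : 0 ≤ ∫ t in Ioi (0:ℝ), f t := by
  by_contra hneg
  have hconv : Convex ℝ {x : X | 0 ≤ x} := by
    intro x hx y hy a b ha hb _
    exact add_nonneg (real_smul_nonneg ha hx) (real_smul_nonneg hb hy)
  obtain ⟨φ, u, hvu, hC⟩ :=
    geometric_hahn_banach_point_closed hconv isClosed_nonneg hneg
  have hu0 : u < 0 := by simpa using hC 0 (le_refl 0)
  have hφpos : ∀ b : X, 0 ≤ b → 0 ≤ φ b := by
    intro b hb
    by_contra hb'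
    push_neg at hb'
    have ht : 0 ≤ (u - 1) / φ b := by
      exact le_of_lt (div_pos_of_neg_of_neg (sub_neg.mpr (hu0.trans zero_lt_one)) hb')
    have := hC (((u - 1) / φ b) • b) (real_smul_nonneg ht hb)
    rw [φ.map_smul, smul_eq_mul, div_mul_cancel₀ _ (ne_of_lt hb')] at this
    exact absurd this (not_lt.mpr (sub_le_self u zero_le_one))
  have hcomm : ∫ t in Ioi (0:ℝ), φ (f t) = φ (∫ t in Ioi (0:ℝ), f t) :=
    φ.integral_comp_comm hf
  have : 0 ≤ ∫ t in Ioi (0:ℝ), φ (f t) :=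
    setIntegral_nonneg measurableSet_Ioi (fun t ht => hφpos _ (h t ht))
  rw [hcomm] at this
  exact absurd (lt_of_le_of_lt this hvu) (not_lt.mpr hu0.le)
end IntPos

section ExpBound
variable {Z : Type*} [NormedAddCommGroup Z] [NormedSpace ℝ Z] [CompleteSpace Z]

lemma C0Semigroup.expBound (T : C0Semigroup Z) :
    ∃ M ω : ℝ, 1 ≤ M ∧ 0 ≤ ω ∧ ∀ t, 0 ≤ t → ‖T.toFun t‖ ≤ M * Real.exp (ω * t) := by
  have hb : ∀ x : Z, ∃ C, ∀ i : Icc (0:ℝ) 1, ‖T.toFun i x‖ ≤ C := by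
    intro x
    obtain ⟨C, hC⟩ := (isCompact_Icc (a := (0:ℝ)) (b := 1)).exists_bound_of_continuousOn
      ((T.strongCont' x).mono Icc_subset_Ici_self)
    exact ⟨C, fun i => hC i i.2⟩
  obtain ⟨C', hC'⟩ := banach_steinhaus hb
  set M := max C' 1 with hM
  have hM1 : (1:ℝ) ≤ M := le_max_right _ _
  have hMpos : (0:ℝ) < M := lt_of_lt_of_le zero_lt_one hM1
  have hIcc : ∀ r : ℝ, 0 ≤ r → r ≤ 1 → ‖T.toFun r‖ ≤ M := by
    intro r h0 h1
    exact le_trans (hC' ⟨r, ⟨h0, h1⟩⟩) (le_max_left _ _)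
  have key : ∀ n : ℕ, ∀ r : ℝ, 0 ≤ r → r ≤ 1 → ‖T.toFun ((n : ℝ) + r)‖ ≤ M ^ (n + 1) := by
    intro n
    induction n with
    | zero => intro r h0 h1; simpa using hIcc r h0 h1
    | succ n ih =>
      intro r h0 h1
      have heq : ((n + 1 : ℕ) : ℝ) + r = 1 + ((n : ℝ) + r) := by push_cast; ring
      rw [heq, T.map_add' 1 ((n : ℝ) + r) (by norm_num) (by positivity)]
      calc ‖(T.toFun 1).comp (T.toFun ((n:ℝ) + r))‖
          ≤ ‖T.toFun 1‖ * ‖T.toFun ((n:ℝ) + r)‖ := ContinuousLinearMap.opNorm_comp_le _ _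
        _ ≤ M * M ^ (n + 1) := by
            apply mul_le_mul (hIcc 1 zero_le_one le_rfl) (ih r h0 h1) (norm_nonneg _) hMpos.le
        _ = M ^ (n + 1 + 1) := by ring
  refine ⟨M, Real.log M, hM1, Real.log_nonneg hM1, fun t ht => ?_⟩
  set n := ⌊t⌋₊ with hn
  have h0 : (n : ℝ) ≤ t := Nat.floor_le ht
  have h1 : t - n ≤ 1 := by
    have := Nat.lt_floor_add_one t
    linarith
  have h2 : (0:ℝ) ≤ t - n := by linarith
  have := key n (t - n) h2 h1
  rw [show (n : ℝ) + (t - n) = t by ring] at this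
  calc ‖T.toFun t‖ ≤ M ^ (n + 1) := this
    _ = M * M ^ n := by ring
    _ = M * Real.exp ((n : ℝ) * Real.log M) := by
        rw [Real.exp_nat_mul, Real.exp_log hMpos]
    _ ≤ M * Real.exp (Real.log M * t) := by
        apply mul_le_mul_of_nonneg_left _ hMpos.le
        apply Real.exp_le_exp.mpr
        rw [mul_comm ((n:ℝ)) (Real.log M)]
        exact mul_le_mul_of_nonneg_left h0 (Real.log_nonneg hM1)
end ExpBound

section Laplace
variable {Z : Type*} [NormedAddCommGroup Z] [NormedSpace ℝ Z] [CompleteSpace Z]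

lemma laplace_contOn (T : C0Semigroup Z) (l : ℝ) (z : Z) :
    ContinuousOn (fun t => Real.exp (-l * t) • T.toFun t z) (Ici 0) :=
  ((Real.continuous_exp.comp (continuous_const.mul continuous_id)).continuousOn).smul
    (T.strongCont' z)

lemma laplace_integrable (T : C0Semigroup Z) {M ω : ℝ}
    (hM : ∀ t, 0 ≤ t → ‖T.toFun t‖ ≤ M * Real.exp (ω * t)) {l : ℝ} (hl : ω < l) (z : Z) :
    IntegrableOn (fun t => Real.exp (-l * t) • T.toFun t z) (Ioi 0) := by
  apply Integrable.mono' (g := fun t => (M * ‖z‖) * Real.exp (-(l - ω) * t))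
  · exact ((exp_neg_integrableOn_Ioi 0 (by linarith : (0:ℝ) < l - ω)).const_mul (M * ‖z‖))
  · exact ((laplace_contOn T l z).mono Ioi_subset_Ici_self).aestronglyMeasurable measurableSet_Ioi
  · filter_upwards [self_mem_ae_restrict measurableSet_Ioi] with t ht
    have ht0 : (0:ℝ) ≤ t := le_of_lt ht
    have h1 : ‖T.toFun t z‖ ≤ (M * Real.exp (ω * t)) * ‖z‖ :=
      le_trans ((T.toFun t).le_opNorm z) (mul_le_mul_of_nonneg_right (hM t ht0) (norm_nonneg z))
    rw [norm_smul, Real.norm_eq_abs, abs_of_pos (Real.exp_pos _)]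
    calc Real.exp (-l * t) * ‖T.toFun t z‖
        ≤ Real.exp (-l * t) * ((M * Real.exp (ω * t)) * ‖z‖) :=
          mul_le_mul_of_nonneg_left h1 (Real.exp_pos _).le
      _ = M * ‖z‖ * Real.exp (-(l - ω) * t) := by
          rw [show -(l - ω) * t = -l * t + ω * t by ring, Real.exp_add]; ring

lemma laplace_gen (T : C0Semigroup Z) {M ω : ℝ}
    (hM : ∀ t, 0 ≤ t → ‖T.toFun t‖ ≤ M * Real.exp (ω * t)) {l : ℝ} (hl : ω < l) (z : Z) :
    Tendsto (fun τ : ℝ => τ⁻¹ • (T.toFun τ (∫ t in Ioi (0:ℝ), Real.exp (-l * t) • T.toFun t z) -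
      ∫ t in Ioi (0:ℝ), Real.exp (-l * t) • T.toFun t z)) (𝓝[>] 0)
      (𝓝 (l • (∫ t in Ioi (0:ℝ), Real.exp (-l * t) • T.toFun t z) - z)) := by
  set F : ℝ → Z := fun t => Real.exp (-l * t) • T.toFun t z with hF
  have hFint : IntegrableOn F (Ioi 0) := laplace_integrable T hM hl z
  set v : Z := ∫ t in Ioi (0:ℝ), F t with hv
  -- Step: for τ > 0, T τ v = exp (l*τ) • (v - ∫ t in Ioc 0 τ, F t)
  have step : ∀ τ : ℝ, 0 < τ →
      T.toFun τ v = Real.exp (l * τ) • (v - ∫ t in Ioc (0:ℝ) τ, F t) := by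
    intro τ hτ
    have a1 : T.toFun τ v = ∫ t in Ioi (0:ℝ), T.toFun τ (F t) :=
      ((T.toFun τ).integral_comp_comm hFint).symm
    have a2 : ∀ t ∈ Ioi (0:ℝ), T.toFun τ (F t) = Real.exp (l * τ) • F (t + τ) := by
      intro t ht
      have ht0 : (0:ℝ) ≤ t := le_of_lt ht
      have hTT : T.toFun (t + τ) z = T.toFun τ (T.toFun t z) := by
        rw [add_comm, T.map_add' τ t hτ.le ht0]; rfl
      simp only [hF]
      rw [(T.toFun τ).map_smul, ← hTT, smul_smul]
      congr 1
      rw [← Real.exp_add]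
      congr 1
      ring
    have a3 : (∫ t in Ioi (0:ℝ), T.toFun τ (F t)) =
        ∫ t in Ioi (0:ℝ), Real.exp (l * τ) • F (t + τ) :=
      setIntegral_congr_fun measurableSet_Ioi a2
    have a4 : (∫ t in Ioi (0:ℝ), Real.exp (l * τ) • F (t + τ)) =
        Real.exp (l * τ) • ∫ t in Ioi (0:ℝ), F (t + τ) := integral_smul _ _
    have a5 : (∫ t in Ioi (0:ℝ), F (t + τ)) = ∫ t in Ioi τ, F t := by
      have hpre : (· + τ) ⁻¹' (Ioi τ) = Ioi (0:ℝ) := by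
        ext x; simp [lt_add_iff_pos_left]
      have := (measurePreserving_add_right volume τ).setIntegral_preimage_emb
        (measurableEmbedding_addRight τ) F (Ioi τ)
      rw [hpre] at this
      exact this
    have a6 : v = (∫ t in Ioc (0:ℝ) τ, F t) + ∫ t in Ioi τ, F t := by
      rw [hv, ← setIntegral_union (Ioc_disjoint_Ioi le_rfl) measurableSet_Ioi
        (hFint.mono_set Ioc_subset_Ioi_self) (hFint.mono_set (Ioi_subset_Ioi hτ.le)),
        Ioc_union_Ioi_eq_Ioi hτ.le]
    rw [a1, a3, a4, a5]
    congr 1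
    rw [a6]; abel
  -- slope limits
  have hA : Tendsto (fun τ : ℝ => τ⁻¹ * (Real.exp (l * τ) - 1)) (𝓝[>] 0) (𝓝 l) := by
    have hd : HasDerivAt (fun τ : ℝ => Real.exp (l * τ)) l 0 := by
      simpa using (((hasDerivAt_id (0:ℝ)).const_mul l).exp)
    rw [hasDerivAt_iff_tendsto_slope] at hd
    have := hd.mono_left (nhdsWithin_mono 0 (fun x (hx : x ∈ Ioi (0:ℝ)) => ne_of_gt hx))
    apply this.congr
    intro τ
    simp only [slope_def_field, mul_zero, Real.exp_zero, sub_zero]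
    rw [div_eq_inv_mul]
  have hB : Tendsto (fun τ : ℝ => Real.exp (l * τ)) (𝓝[>] 0) (𝓝 1) := by
    have : Continuous (fun τ : ℝ => Real.exp (l * τ)) :=
      Real.continuous_exp.comp (continuous_const.mul continuous_id)
    simpa using (this.tendsto 0).mono_left nhdsWithin_le_nhds
  have hC : Tendsto (fun τ : ℝ => τ⁻¹ • (∫ t in Ioc (0:ℝ) τ, F t)) (𝓝[>] 0) (𝓝 z) := by
    have hG : HasDerivWithinAt (fun τ : ℝ => ∫ t in (0:ℝ)..τ, F t) (F 0) (Ici 0) 0 := by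
      apply intervalIntegral.integral_hasDerivWithinAt_right (t := Ioi (0:ℝ))
        IntervalIntegrable.refl
      · exact ⟨Ioi 0, self_mem_nhdsWithin,
          ((laplace_contOn T l z).mono Ioi_subset_Ici_self).aestronglyMeasurable
            measurableSet_Ioi⟩
      · exact ((laplace_contOn T l z).continuousWithinAt self_mem_Ici).mono
          Ioi_subset_Ici_self
    have hF0 : F 0 = z := by simp [hF, T.map_zero']
    rw [hasDerivWithinAt_iff_tendsto_slope, Ici_sdiff_left, hF0] at hG
    apply hG.congr'
    filter_upwards [self_mem_nhdsWithin] with τ (hτ : 0 < τ)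
    simp only [slope, vsub_eq_sub, sub_zero, intervalIntegral.integral_same,
      intervalIntegral.integral_of_le hτ.le]
  have hAv := hA.smul_const v
  have hBC := hB.smul hC
  have hfin := hAv.sub hBC
  rw [one_smul] at hfin
  apply hfin.congr'
  filter_upwards [self_mem_nhdsWithin] with τ (hτ : 0 < τ)
  rw [step τ hτ]
  module
end Laplace

section GenValue
variable {Z : Type*} [NormedAddCommGroup Z] [NormedSpace ℝ Z]

lemma gen_value (T : C0Semigroup Z) (A : Z →ₗ.[ℝ] Z) (hA : T.IsGenerator A) {v w : Z}
    (h : Tendsto (fun τ : ℝ => τ⁻¹ • (T.toFun τ v - v)) (𝓝[>] 0) (𝓝 w)) :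
    ∃ hv : v ∈ A.domain, A ⟨v, hv⟩ = w := by
  have hv : v ∈ A.domain := (hA.1 v).2 ⟨w, h⟩
  exact ⟨hv, tendsto_nhds_unique (hA.2 ⟨v, hv⟩) h⟩
end GenValue

set_option maxHeartbeats 1000000 in
/-- Let `A` generate a positive `C₀`-semigroup on a Banach lattice `X`, with
extrapolation space `X₋₁` (given by a continuous dense injection `j : X → X₋₁`,
the extended semigroup `T₋₁` and its generator `A₋₁`), and let `X₋₁,₊` be the
closure of `j(X₊)`.  A linear operator `B : U → X₋₁` is positive
(`B U₊ ⊆ X₋₁,₊`) iff `R(λ, A₋₁) B : U → X` is positive for all `λ > s(A)`,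
where `s` is the spectral bound (so that the resolvent exists for `λ > s`). -/
theorem positive_B_iff_positive_resolvent_B
    {X U Xm1 : Type*}
    [NormedAddCommGroup X] [Lattice X] [HasSolidNorm X] [IsOrderedAddMonoid X] [NormedSpace ℝ X] [CompleteSpace X]
    [NormedAddCommGroup U] [Lattice U] [HasSolidNorm U] [IsOrderedAddMonoid U] [NormedSpace ℝ U] [CompleteSpace U]
    [NormedAddCommGroup Xm1] [NormedSpace ℝ Xm1] [CompleteSpace Xm1]
    (Tsg : C0Semigroup X)
    (hTpos : ∀ t : ℝ, 0 ≤ t → ∀ x : X, 0 ≤ x → 0 ≤ Tsg.toFun t x)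
    (A : X →ₗ.[ℝ] X) (hA : Tsg.IsGenerator A)
    (j : X →L[ℝ] Xm1) (hj : Function.Injective j) (hjd : DenseRange j)
    (Tm1 : C0Semigroup Xm1)
    (hTm1 : ∀ t : ℝ, 0 ≤ t → ∀ x : X, Tm1.toFun t (j x) = j (Tsg.toFun t x))
    (Am1 : Xm1 →ₗ.[ℝ] Xm1) (hAm1 : Tm1.IsGenerator Am1)
    (s : ℝ) (R : ℝ → Xm1 →L[ℝ] X)
    (hR : ∀ l : ℝ, s < l → IsResolventAt Am1 l (j.comp (R l)))
    (B : U →ₗ[ℝ] Xm1) :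
    (∀ u : U, 0 ≤ u → B u ∈ closure (j '' {x : X | 0 ≤ x})) ↔
      (∀ l : ℝ, s < l → ∀ u : U, 0 ≤ u → 0 ≤ R l (B u)) := by
  obtain ⟨M₁, ω₁, hM₁1, hω₁0, hbd₁⟩ := Tsg.expBound
  obtain ⟨M₂, ω₂, hM₂1, hω₂0, hbd₂⟩ := Tm1.expBound
  set C : Set Xm1 := closure (j '' {x : X | 0 ≤ x}) with hC
  -- K1 : positivity of the resolvent for large l
  have key1 : ∀ l : ℝ, s < l → ω₁ < l → ∀ x : X, 0 ≤ x → 0 ≤ R l (j x) := by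
    intro l hsl hωl x hx
    set v : X := ∫ t in Ioi (0:ℝ), Real.exp (-l * t) • Tsg.toFun t x with hv
    have hlim := laplace_gen Tsg hbd₁ hωl x
    have hlimj : Tendsto (fun τ : ℝ => τ⁻¹ • (Tm1.toFun τ (j v) - j v)) (𝓝[>] 0)
        (𝓝 (l • (j v) - j x)) := by
      have hcont : Tendsto (fun τ : ℝ => j (τ⁻¹ • (Tsg.toFun τ v - v))) (𝓝[>] 0)
          (𝓝 (j (l • v - x))) := (j.continuous.tendsto _).comp hlim
      rw [show j (l • v - x) = l • (j v) - j x by rw [map_sub, j.map_smul]] at hcont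
      apply hcont.congr'
      filter_upwards [self_mem_nhdsWithin] with τ (hτ : 0 < τ)
      rw [j.map_smul, map_sub, hTm1 τ hτ.le v]
    obtain ⟨hdom, hval⟩ := gen_value Tm1 Am1 hAm1 hlimj
    have h2 := (hR l hsl).2 ⟨j v, hdom⟩
    rw [hval, show l • (j v) - (l • (j v) - j x) = j x from sub_sub_cancel _ _] at h2
    have hRv : R l (j x) = v := hj (by simpa using h2)
    rw [hRv]
    apply integral_nonneg_Ioi (laplace_integrable Tsg hbd₁ hωl x)
    intro t ht
    exact real_smul_nonneg (Real.exp_pos _).le (hTpos t (le_of_lt ht) x hx)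
  have key1' : ∀ l : ℝ, s < l → ω₁ < l → ∀ y ∈ C, 0 ≤ R l y := by
    intro l hsl hωl y hy
    have hsub : C ⊆ (R l) ⁻¹' {x : X | 0 ≤ x} := by
      apply closure_minimal _ (isClosed_nonneg.preimage (R l).continuous)
      rintro _ ⟨x, hx, rfl⟩
      exact key1 l hsl hωl x hx
    exact hsub hy
  -- K3 : resolvent identity
  have resid : ∀ l m : ℝ, s < l → s < m → ∀ y : Xm1,
      R m y = R l y + (l - m) • R l (j (R m y)) := by
    intro l m hl hm y
    obtain ⟨hz, hzeq⟩ := (hR m hm).1 y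
    have hval : Am1 ⟨(j.comp (R m)) y, hz⟩ = m • ((j.comp (R m)) y) - y := by
      apply eq_sub_iff_add_eq.mpr
      rw [add_comm]
      exact (sub_eq_iff_eq_add.mp hzeq).symm
    have h2 := (hR l hl).2 ⟨(j.comp (R m)) y, hz⟩
    rw [hval] at h2
    have harg : l • ((j.comp (R m)) y) - (m • ((j.comp (R m)) y) - y) =
        y + (l - m) • ((j.comp (R m)) y) := by
      rw [sub_smul]; abel
    rw [harg, (j.comp (R l)).map_add, (j.comp (R l)).map_smul] at h2
    apply hj
    simp only [ContinuousLinearMap.comp_apply] at h2 ⊢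
    rw [map_add, j.map_smul]
    exact h2.symm
  -- K4 : Neumann series step
  have neumann : ∀ l m : ℝ, s < l → s < m → l < m → (∀ y ∈ C, 0 ≤ R m y) →
      (m - l) * ‖j.comp (R m)‖ < 1 → ∀ y ∈ C, 0 ≤ R l y := by
    intro l m hsl hsm hlm hPm hq y hy
    set K : Xm1 →L[ℝ] Xm1 := (m - l) • (j.comp (R m)) with hK
    have hKnorm : ‖K‖ < 1 := by
      rw [hK]
      refine lt_of_le_of_lt (ContinuousLinearMap.opNorm_smul_le _ _) ?_
      rwa [Real.norm_eq_abs, abs_of_nonneg (by linarith : (0:ℝ) ≤ m - l)]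
    set z : Xm1 := j (R m y) with hz
    have happly : ∀ (n : ℕ) (w : Xm1), (K ^ (n+1)) w = K ((K ^ n) w) := by
      intro n w; rw [pow_succ']; rfl
    have hKbd : ∀ n : ℕ, ‖(K ^ n) z‖ ≤ ‖K‖ ^ n * ‖z‖ := by
      intro n; induction n with
      | zero => simp
      | succ n ih =>
        rw [happly]
        calc ‖K ((K ^ n) z)‖ ≤ ‖K‖ * ‖(K ^ n) z‖ := K.le_opNorm _
          _ ≤ ‖K‖ * (‖K‖ ^ n * ‖z‖) :=
              mul_le_mul_of_nonneg_left ih (norm_nonneg _)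
          _ = ‖K‖ ^ (n+1) * ‖z‖ := by ring
    have hsum : Summable (fun n : ℕ => (K ^ n) z) := by
      apply Summable.of_norm_bounded (Summable.mul_right ‖z‖
        (summable_geometric_of_lt_one (norm_nonneg K) hKnorm)) hKbd
    set w : Xm1 := ∑' n, (K ^ n) z with hw
    have hKw : K w = ∑' n, (K ^ (n+1)) z := by
      rw [hw, K.map_tsum hsum]
      exact tsum_congr fun n => (happly n z).symm
    have hweq : w = z + K w := by
      rw [hKw, hw, hsum.tsum_eq_zero_add]
      simp
    have hfix : j (R l y) = z + K (j (R l y)) := by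
      have hre := resid m l hsm hsl y
      calc j (R l y) = j (R m y + (m - l) • R m (j (R l y))) := by rw [← hre]
        _ = z + K (j (R l y)) := by
            rw [map_add, j.map_smul, hz, hK]
            simp [ContinuousLinearMap.comp_apply]
    have hjRl : j (R l y) = w := by
      have hdiff : j (R l y) - w = K (j (R l y) - w) := by
        rw [K.map_sub]
        calc j (R l y) - w = (z + K (j (R l y))) - (z + K w) := by rw [← hfix, ← hweq]
          _ = K (j (R l y)) - K w := by abel
      have h0 : ‖j (R l y) - w‖ ≤ ‖K‖ * ‖j (R l y) - w‖ := by
        conv_lhs => rw [hdiff]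
        exact K.le_opNorm _
      have := norm_nonneg (j (R l y) - w)
      have hn0 : ‖j (R l y) - w‖ = 0 := by nlinarith
      have := norm_eq_zero.mp hn0
      exact sub_eq_zero.mp this
    have hKpos : ∀ n : ℕ, (K ^ n) z ∈ j '' {x : X | 0 ≤ x} := by
      intro n; induction n with
      | zero => exact ⟨R m y, hPm y hy, by simp [hz]⟩
      | succ n ih =>
        obtain ⟨x, hx, hxe⟩ := ih
        rw [happly, ← hxe]
        refine ⟨(m - l) • R m (j x), real_smul_nonneg (by linarith) ?_, ?_⟩
        · exact hPm (j x) (subset_closure ⟨x, hx, rfl⟩)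
        · rw [j.map_smul, hK]; simp [ContinuousLinearMap.comp_apply]
    have hre2 : R l y = R m y + (m - l) • R m w := by
      have hre := resid m l hsm hsl y
      rw [hre, hjRl]
    rw [hre2, (R m).map_tsum hsum]
    apply add_nonneg (hPm y hy)
    apply real_smul_nonneg (by linarith : (0:ℝ) ≤ m - l)
    apply tsum_nonneg
    intro n
    obtain ⟨x, hx, hxe⟩ := hKpos n
    rw [← hxe]
    exact hPm (j x) (subset_closure ⟨x, hx, rfl⟩)
  -- K5 : positivity passes to the left endpoint
  have limstep : ∀ m : ℝ, s < m → (∀ l, m < l → ∀ y ∈ C, 0 ≤ R l y) →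
      ∀ y ∈ C, 0 ≤ R m y := by
    intro m hm hP y hy
    set a : ℝ := ‖R m‖ * ‖j‖ with ha
    have ha0 : 0 ≤ a := mul_nonneg (norm_nonneg _) (norm_nonneg _)
    set δ : ℝ := (2 * (a + 1))⁻¹ with hδ
    have hδpos : 0 < δ := by rw [hδ]; positivity
    have hbound : ∀ l, m < l → l ≤ m + δ → ∀ y' : Xm1, ‖R l y'‖ ≤ 2 * ‖R m y'‖ := by
      intro l hml hlδ y'
      have hre := resid l m (lt_trans hm hml) hm y'
      -- R m y' = R l y' + (l - m) • R l (j (R m y'))  -- wrong direction; use other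
      have hre2 := resid m l hm (lt_trans hm hml) y'
      -- R l y' = R m y' + (m - l) • R m (j (R l y'))
      have hb1 : ‖R l y'‖ ≤ ‖R m y'‖ + (l - m) * (a * ‖R l y'‖) := by
        refine le_trans (le_of_eq (congrArg norm hre2)) (le_trans (norm_add_le _ _) ?_)
        apply add_le_add le_rfl
        rw [norm_smul, Real.norm_eq_abs, abs_of_nonpos (by linarith : m - l ≤ 0), neg_sub]
        apply mul_le_mul_of_nonneg_left _ (by linarith : (0:ℝ) ≤ l - m)
        calc ‖R m (j (R l y'))‖ ≤ ‖R m‖ * ‖j (R l y')‖ := (R m).le_opNorm _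
          _ ≤ ‖R m‖ * (‖j‖ * ‖R l y'‖) :=
              mul_le_mul_of_nonneg_left (j.le_opNorm _) (norm_nonneg _)
          _ = a * ‖R l y'‖ := by rw [ha]; ring
      have hsmall : (l - m) * a ≤ 2⁻¹ := by
        have h1 : l - m ≤ δ := by linarith
        have h2 : δ * a ≤ 2⁻¹ := by
          rw [hδ]
          rw [inv_mul_le_iff₀ (by positivity : (0:ℝ) < 2 * (a + 1))]
          nlinarith
        nlinarith [norm_nonneg (R l y')]
      nlinarith [norm_nonneg (R l y'), norm_nonneg (R m y')]
    have htd : Tendsto (fun l => R l y) (𝓝[>] m) (𝓝 (R m y)) := by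
      rw [tendsto_iff_norm_sub_tendsto_zero]
      have hg0 : Tendsto (fun l : ℝ => (l - m) * (2 * ‖R m (j (R m y))‖)) (𝓝[>] m) (𝓝 0) := by
        have h' : Tendsto (fun l : ℝ => (l - m) * (2 * ‖R m (j (R m y))‖)) (𝓝 m)
            (𝓝 ((m - m) * (2 * ‖R m (j (R m y))‖))) :=
          ((continuous_id.sub continuous_const).mul continuous_const).tendsto m
        simpa using h'.mono_left nhdsWithin_le_nhds
      apply squeeze_zero' ?_ ?_ hg0
      · filter_upwards with l using norm_nonneg _
      · filter_upwards [Ioc_mem_nhdsGT (lt_add_of_pos_right m hδpos)]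
          with l hl
        have hre := resid l m (lt_trans hm hl.1) hm y
        have hd2 : R l y - R m y = -((l - m) • R l (j (R m y))) := by
          rw [congrArg (fun q => R l y - q) hre]; abel
        rw [hd2, norm_neg, norm_smul, Real.norm_eq_abs,
          abs_of_nonneg (by linarith [hl.1] : (0:ℝ) ≤ l - m)]
        exact mul_le_mul_of_nonneg_left (hbound l hl.1 hl.2 _) (by linarith [hl.1])
    have hev : ∀ᶠ l in 𝓝[>] m, 0 ≤ R l y :=
      eventually_nhdsWithin_of_forall (fun l hl => hP l hl y hy)
    exact ge_of_tendsto htd hev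
  -- K6 : infimum argument — positivity for all l > s
  have forward_pos : ∀ l, s < l → ∀ y ∈ C, 0 ≤ R l y := by
    intro l₀ hl₀
    set E : Set ℝ := {m : ℝ | l₀ ≤ m ∧ ∀ l, m < l → ∀ y ∈ C, 0 ≤ R l y} with hE
    have hEmem : max l₀ (max s ω₁) ∈ E := by
      refine ⟨le_max_left _ _, fun l hl y hy => ?_⟩
      have h1 : s < l := lt_of_le_of_lt (le_trans (le_max_left s ω₁) (le_max_right _ _)) hl
      have h2 : ω₁ < l := lt_of_le_of_lt (le_trans (le_max_right s ω₁) (le_max_right _ _)) hl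
      exact key1' l h1 h2 y hy
    have hEne : E.Nonempty := ⟨_, hEmem⟩
    have hbdd : BddBelow E := ⟨l₀, fun m hm => hm.1⟩
    set m' := sInf E with hm'
    have hm'l₀ : l₀ ≤ m' := le_csInf hEne (fun m hm => hm.1)
    have hm's : s < m' := lt_of_lt_of_le hl₀ hm'l₀
    have hPgt : ∀ l, m' < l → ∀ y ∈ C, 0 ≤ R l y := by
      intro l hl y hy
      obtain ⟨m, hmE, hml⟩ := exists_lt_of_csInf_lt hEne hl
      exact hmE.2 l hml y hy
    have hPm' : ∀ y ∈ C, 0 ≤ R m' y := limstep m' hm's hPgt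
    by_cases hc : m' ≤ l₀
    · have heq : m' = l₀ := le_antisymm hc hm'l₀
      rw [← heq]; exact hPm'
    · exfalso
      push_neg at hc
      set N : ℝ := ‖j.comp (R m')‖ with hN
      have hN0 : 0 ≤ N := norm_nonneg _
      set δ' : ℝ := (2 * (N + 1))⁻¹ with hδ'
      have hδ'pos : 0 < δ' := by rw [hδ']; positivity
      set m'' : ℝ := max l₀ (max (m' - δ') ((s + m') / 2)) with hm''
      have hm''lt : m'' < m' := by
        rw [hm'']
        apply max_lt hc (max_lt (by linarith) (by linarith))
      have hm''E : m'' ∈ E := by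
        refine ⟨le_max_left _ _, fun l hl y hy => ?_⟩
        rcases lt_or_ge m' l with h | h
        · exact hPgt l h y hy
        · have hsl : s < l := by
            have : (s + m') / 2 ≤ m'' := le_trans (le_max_right _ _) (le_max_right _ _)
            linarith
          rcases eq_or_lt_of_le h with heq | hlt
          · rw [heq]; exact hPm' y hy
          · apply neumann l m' hsl hm's hlt hPm' _ y hy
            have h1 : m' - δ' ≤ m'' := le_trans (le_max_left _ _) (le_max_right _ _)
            have h2 : m' - l < δ' := by linarith
            have h3 : δ' * N < 1 := by
              rw [hδ']
              rw [inv_mul_lt_iff₀ (by positivity : (0:ℝ) < 2 * (N + 1))]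
              nlinarith
            nlinarith
      have : m' ≤ m'' := csInf_le hbdd hm''E
      linarith
  constructor
  · intro hfwd l hl u hu
    exact forward_pos l hl (B u) (hfwd u hu)
  · intro hrev u hu
    have hvl : ∀ l : ℝ, s < l → ω₂ < l →
        j (R l (B u)) = ∫ t in Ioi (0:ℝ), Real.exp (-l * t) • Tm1.toFun t (B u) := by
      intro l hsl hωl
      obtain ⟨hdom, hval⟩ := gen_value Tm1 Am1 hAm1 (laplace_gen Tm1 hbd₂ hωl (B u))
      have h2 := (hR l hsl).2 ⟨_, hdom⟩
      rw [hval, show l • (∫ t in Ioi (0:ℝ), Real.exp (-l * t) • Tm1.toFun t (B u)) -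
          (l • (∫ t in Ioi (0:ℝ), Real.exp (-l * t) • Tm1.toFun t (B u)) - B u) = B u
          from sub_sub_cancel _ _] at h2
      simpa using h2
    have hTd : Tendsto (fun l : ℝ => ∫ t in Ioi (0:ℝ), Real.exp (-t) • Tm1.toFun (t / l) (B u))
        atTop (𝓝 (B u)) := by
      have hIa : Integrable (fun t : ℝ => (M₂ * ‖B u‖) * Real.exp (-(2⁻¹ : ℝ) * t))
          (volume.restrict (Ioi 0)) :=
        (exp_neg_integrableOn_Ioi 0 (by norm_num)).const_mul _
      have hmeas : ∀ᶠ l : ℝ in atTop, AEStronglyMeasurable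
          (fun t : ℝ => Real.exp (-t) • Tm1.toFun (t / l) (B u)) (volume.restrict (Ioi 0)) := by
        filter_upwards [eventually_ge_atTop (1:ℝ)] with l hl
        apply ContinuousOn.aestronglyMeasurable _ measurableSet_Ioi
        apply ContinuousOn.smul
        · exact (Real.continuous_exp.comp continuous_neg).continuousOn
        · apply (Tm1.strongCont' (B u)).comp (continuous_id.div_const l).continuousOn
          intro t (ht : 0 < t)
          exact div_nonneg ht.le (by linarith)
      have hbnd : ∀ᶠ l : ℝ in atTop, ∀ᵐ t ∂(volume.restrict (Ioi (0:ℝ))),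
          ‖Real.exp (-t) • Tm1.toFun (t / l) (B u)‖ ≤ (M₂ * ‖B u‖) * Real.exp (-(2⁻¹:ℝ) * t) := by
        filter_upwards [eventually_ge_atTop (max 1 (2 * ω₂))] with l hl
        filter_upwards [self_mem_ae_restrict measurableSet_Ioi] with t (ht : 0 < t)
        have hl1 : (1:ℝ) ≤ l := le_trans (le_max_left _ _) hl
        have hl2 : 2 * ω₂ ≤ l := le_trans (le_max_right _ _) hl
        have hl0 : (0:ℝ) < l := lt_of_lt_of_le zero_lt_one hl1
        have htl : 0 ≤ t / l := div_nonneg ht.le hl0.le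
        rw [norm_smul, Real.norm_eq_abs, abs_of_pos (Real.exp_pos _)]
        have hTn : ‖Tm1.toFun (t / l) (B u)‖ ≤ (M₂ * Real.exp (ω₂ * (t / l))) * ‖B u‖ :=
          le_trans ((Tm1.toFun _).le_opNorm (B u))
            (mul_le_mul_of_nonneg_right (hbd₂ _ htl) (norm_nonneg _))
        calc Real.exp (-t) * ‖Tm1.toFun (t / l) (B u)‖
            ≤ Real.exp (-t) * ((M₂ * Real.exp (ω₂ * (t / l))) * ‖B u‖) :=
              mul_le_mul_of_nonneg_left hTn (Real.exp_pos _).le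
          _ = (M₂ * ‖B u‖) * Real.exp (-t + ω₂ * (t / l)) := by
              rw [Real.exp_add]; ring
          _ ≤ (M₂ * ‖B u‖) * Real.exp (-(2⁻¹:ℝ) * t) := by
              apply mul_le_mul_of_nonneg_left _ (by positivity)
              apply Real.exp_le_exp.mpr
              have hrl : t / l * l = t := div_mul_cancel₀ t (ne_of_gt hl0)
              nlinarith [mul_nonneg (sub_nonneg.mpr hl2) htl]
      have hconv : ∀ᵐ t ∂(volume.restrict (Ioi (0:ℝ))),
          Tendsto (fun l : ℝ => Real.exp (-t) • Tm1.toFun (t / l) (B u)) atTop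
            (𝓝 (Real.exp (-t) • B u)) := by
        filter_upwards [self_mem_ae_restrict measurableSet_Ioi] with t (ht : 0 < t)
        have hg : ContinuousWithinAt (fun τ : ℝ => Tm1.toFun τ (B u)) (Ici 0) 0 :=
          (Tm1.strongCont' (B u)).continuousWithinAt self_mem_Ici
        have h2 : Tendsto (fun l : ℝ => t / l) atTop (𝓝[Ici (0:ℝ)] 0) := by
          rw [tendsto_nhdsWithin_iff]
          constructor
          · exact tendsto_const_nhds.div_atTop tendsto_id
          · filter_upwards [eventually_gt_atTop (0:ℝ)] with l hl
            exact div_nonneg ht.le hl.le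
        have h3 := hg.tendsto.comp h2
        rw [show Tm1.toFun 0 (B u) = B u by rw [Tm1.map_zero']; rfl] at h3
        exact h3.const_smul _
      have hdct := tendsto_integral_filter_of_dominated_convergence _ hmeas hbnd hIa hconv
      rw [show (∫ t in Ioi (0:ℝ), Real.exp (-t) • B u) = B u by
        rw [integral_smul_const, integral_exp_neg_Ioi_zero, one_smul]] at hdct
      exact hdct
    apply mem_closure_of_tendsto hTd
    filter_upwards [eventually_gt_atTop (max s ω₂), eventually_gt_atTop (0:ℝ)] with l hl hl0
    have hsl : s < l := lt_of_le_of_lt (le_max_left _ _) hl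
    have hωl : ω₂ < l := lt_of_le_of_lt (le_max_right _ _) hl
    have hchg : (∫ t in Ioi (0:ℝ), Real.exp (-t) • Tm1.toFun (t / l) (B u))
        = l • ∫ t in Ioi (0:ℝ), Real.exp (-l * t) • Tm1.toFun t (B u) := by
      have hcv := integral_comp_mul_left_Ioi
        (fun t => Real.exp (-t) • Tm1.toFun (t / l) (B u)) 0 hl0
      rw [mul_zero] at hcv
      have hsimp : ∀ x ∈ Ioi (0:ℝ), Real.exp (-(l * x)) • Tm1.toFun ((l * x) / l) (B u)
          = Real.exp (-l * x) • Tm1.toFun x (B u) := by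
        intro x hx
        rw [mul_div_cancel_left₀ _ (ne_of_gt hl0), neg_mul]
      rw [setIntegral_congr_fun measurableSet_Ioi hsimp] at hcv
      rw [hcv, smul_smul, mul_inv_cancel₀ (ne_of_gt hl0), one_smul]
    rw [hchg, ← hvl l hsl hωl, ← j.map_smul]
    exact ⟨l • R l (B u), real_smul_nonneg hl0.le (hrev l hsl u hu), rfl⟩
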